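/- Let M be a matching in a 2-layered bipartite graph such that in the intersection graph H[M] every vertex has degree exactly 2 and H[M] is a cycle (connected 2-regular). Then |M| ≤ 4. -/

import Mathlib

def inter (e f : ℕ × ℕ) : Prop :=
  (e.1 < f.1 ∧ f.2 < e.2) ∨ (f.1 < e.1 ∧ e.2 < f.2)

def IsMatching (M : Set (ℕ × ℕ)) : Prop :=
  ∀ e ∈ M, ∀ f ∈ M, e ≠ f → e.1 ≠ f.1 ∧ e.2 ≠ f.2

def HG (M : Set (ℕ × ℕ)) : SimpleGraph M where
  Adj e f := inter e.1 f.1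
  symm := ⟨by intro a b h; unfold inter at h ⊢; omega⟩
  loopless := ⟨by intro a h; unfold inter at h; omega⟩

theorem cycle_length_at_most_four (M : Finset (ℕ × ℕ))
    (hM : IsMatching ↑M)
    (hconn : (HG ↑M).Connected)
    (hdeg : ∀ e ∈ M, Set.ncard {f | f ∈ (M : Set (ℕ × ℕ)) ∧ inter e f} = 2) :
    M.card ≤ 4 := by
  classical
  rcases M.eq_empty_or_nonempty with rfl | hne
  · simp
  obtain ⟨f, hfM, hfmin⟩ := M.exists_min_image (fun e => e.2) hne
  obtain ⟨a, haM, hamin⟩ := M.exists_min_image (fun e => e.1) hne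
  set N : ℕ × ℕ → Finset (ℕ × ℕ) := fun e => M.filter (fun g => inter e g) with hN
  have hmemN : ∀ e g : ℕ × ℕ, g ∈ N e ↔ g ∈ M ∧ inter e g := by
    intro e g; simp [hN]
  have hcard : ∀ e ∈ M, (N e).card = 2 := by
    intro e he
    have h := hdeg e he
    have hset : {f | f ∈ (M : Set (ℕ × ℕ)) ∧ inter e f} = ↑(N e) := by
      ext g; simp [hN]
    rw [hset, Set.ncard_coe_finset] at h
    exact h
  have hdist : ∀ g ∈ M, ∀ g' ∈ M, g ≠ g' → g.1 ≠ g'.1 ∧ g.2 ≠ g'.2 := by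
    intro g hg g' hg' hne'
    exact hM g (by exact_mod_cast hg) g' (by exact_mod_cast hg') hne'
  have hf2 : ∀ g ∈ M, g ≠ f → f.2 < g.2 := by
    intro g hg hgf
    have h1 := (hdist g hg f hfM hgf).2
    have h2 := hfmin g hg; omega
  have ha1 : ∀ g ∈ M, g ≠ a → a.1 < g.1 := by
    intro g hg hga
    have h1 := (hdist g hg a haM hga).1
    have h2 := hamin g hg; omega
  have hNf : ∀ g ∈ M, (inter f g ↔ g.1 < f.1) := by
    intro g hg
    constructor
    · rintro (⟨h1, h2⟩ | ⟨h1, h2⟩)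
      · exfalso
        have hgf : g ≠ f := by intro h; rw [h] at h2; omega
        have := hf2 g hg hgf; omega
      · exact h1
    · intro h1
      have hgf : g ≠ f := by intro h; rw [h] at h1; omega
      exact Or.inr ⟨h1, hf2 g hg hgf⟩
  have hNa : ∀ g ∈ M, (inter a g ↔ g.2 < a.2) := by
    intro g hg
    constructor
    · rintro (⟨h1, h2⟩ | ⟨h1, h2⟩)
      · exact h2
      · exfalso
        have hga : g ≠ a := by intro h; rw [h] at h1; omega
        have := ha1 g hg hga; omega
    · intro h2
      have hga : g ≠ a := by intro h; rw [h] at h2; omega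
      exact Or.inl ⟨ha1 g hg hga, h2⟩
  have haf : a ≠ f := by
    intro h
    have h2 := hcard f hfM
    have hempty : N f = ∅ := by
      ext g
      simp only [hmemN, Finset.notMem_empty, iff_false, not_and]
      intro hg hint
      have h1 := (hNf g hg).1 hint
      have h3 := hamin g hg
      rw [h] at h3
      omega
    rw [hempty] at h2
    simp at h2
  have ha1f : a.1 < f.1 := ha1 f hfM (Ne.symm haf)
  have hf2a : f.2 < a.2 := hf2 a haM haf
  have haNf : a ∈ N f := (hmemN f a).2 ⟨haM, (hNf a haM).2 ha1f⟩
  have hfNa : f ∈ N a := (hmemN a f).2 ⟨hfM, (hNa f hfM).2 hf2a⟩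
  have pair : ∀ (s : Finset (ℕ × ℕ)) (x : ℕ × ℕ), s.card = 2 → x ∈ s →
      ∃ b, b ≠ x ∧ s = {x, b} := by
    intro s x hs hx
    obtain ⟨u, v, huv, rfl⟩ := Finset.card_eq_two.mp hs
    rcases Finset.mem_insert.mp hx with rfl | hx'
    · exact ⟨v, huv.symm, rfl⟩
    · have hxv : x = v := by simpa using hx'
      subst hxv
      exact ⟨u, huv, Finset.pair_comm u x⟩
  obtain ⟨y, hyne, hLy⟩ := pair (N f) a (hcard f hfM) haNf
  obtain ⟨z, hzne, hBz⟩ := pair (N a) f (hcard a haM) hfNa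
  have hyNf : y ∈ N f := by rw [hLy]; simp
  have hzNa : z ∈ N a := by rw [hBz]; simp
  obtain ⟨hyM, hyint⟩ := (hmemN f y).1 hyNf
  obtain ⟨hzM, hzint⟩ := (hmemN a z).1 hzNa
  have hy1 : y.1 < f.1 := (hNf y hyM).1 hyint
  have hz2 : z.2 < a.2 := (hNa z hzM).1 hzint
  have hyf : y ≠ f := by intro h; rw [h] at hy1; omega
  have hza : z ≠ a := by intro h; rw [h] at hz2; omega
  have hfy2 : f.2 < y.2 := hf2 y hyM hyf
  have hay1 : a.1 < y.1 := ha1 y hyM hyne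
  have haz1 : a.1 < z.1 := ha1 z hzM hza
  have hfz2 : f.2 < z.2 := hf2 z hzM hzne
  -- connectivity lemma
  have conclude : ∀ S : Finset (ℕ × ℕ), a ∈ S →
      (∀ u g : ℕ × ℕ, u ∈ S → g ∈ M → inter u g → g ∈ S) → M ⊆ S := by
    intro S haS hcl g hg
    have key : ∀ (u v : (M : Set (ℕ × ℕ))) (w : (HG ↑M).Walk u v),
        (u : ℕ × ℕ) ∈ S → (v : ℕ × ℕ) ∈ S := by
      intro u v w
      induction w with
      | nil => exact id
      | cons h p ih =>
        intro hu
        exact ih (hcl _ _ hu (by exact_mod_cast Subtype.mem _) h)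
    obtain ⟨w⟩ := hconn.preconnected ⟨a, by exact_mod_cast haM⟩ ⟨g, by exact_mod_cast hg⟩
    exact key _ _ w haS
  by_cases hyz : y = z
  · -- |M| = 3 case
    subst hyz
    have hNy : ({a, f} : Finset (ℕ × ℕ)) = N y := by
      apply Finset.eq_of_subset_of_card_le
      · intro g hg
        rcases Finset.mem_insert.mp hg with rfl | hg'
        · exact (hmemN y g).2 ⟨haM, Or.inr ⟨hay1, hz2⟩⟩
        · have hgf : g = f := by simpa using hg'
          subst hgf
          exact (hmemN y g).2 ⟨hfM, Or.inl ⟨hy1, hfy2⟩⟩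
      · rw [hcard y hyM, Finset.card_insert_of_notMem (by simp [haf]), Finset.card_singleton]
    have hsub : M ⊆ ({a, f, y} : Finset (ℕ × ℕ)) := by
      apply conclude _ (by simp)
      intro u g hu hg hint
      have hgNu : g ∈ N u := (hmemN u g).2 ⟨hg, hint⟩
      rcases Finset.mem_insert.mp hu with rfl | hu'
      · rw [hBz] at hgNu; simp at hgNu ⊢; tauto
      rcases Finset.mem_insert.mp hu' with rfl | hu''
      · rw [hLy] at hgNu; simp at hgNu ⊢; tauto
      · have huy : u = y := by simpa using hu''
        subst huy
        rw [← hNy] at hgNu; simp at hgNu ⊢; tauto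
    calc M.card ≤ ({a, f, y} : Finset (ℕ × ℕ)).card := Finset.card_le_card hsub
      _ ≤ 3 := by
          have h1 := Finset.card_insert_le a ({f, y} : Finset (ℕ × ℕ))
          have h2 := Finset.card_insert_le f ({y} : Finset (ℕ × ℕ))
          have h3 : ({y} : Finset (ℕ × ℕ)).card = 1 := Finset.card_singleton y
          omega
      _ ≤ 4 := by omega
  · -- |M| = 4 case
    have hyNa : y ∉ N a := by rw [hBz]; simp [hyf, hyz]
    have hzNf : z ∉ N f := by rw [hLy]; simp [hza, Ne.symm hyz]
    have hya2 : a.2 < y.2 := by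
      have h1 : ¬ inter a y := fun h => hyNa ((hmemN a y).2 ⟨hyM, h⟩)
      have h2 := (hdist y hyM a haM hyne).2
      have h3 : ¬ (y.2 < a.2) := fun h => h1 ((hNa y hyM).2 h)
      omega
    have hzf1 : f.1 < z.1 := by
      have h1 : ¬ inter f z := fun h => hzNf ((hmemN f z).2 ⟨hzM, h⟩)
      have h2 := (hdist z hzM f hfM hzne).1
      have h3 : ¬ (z.1 < f.1) := fun h => h1 ((hNf z hzM).2 h)
      omega
    have hNy : ({f, z} : Finset (ℕ × ℕ)) = N y := by
      apply Finset.eq_of_subset_of_card_le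
      · intro g hg
        rcases Finset.mem_insert.mp hg with rfl | hg'
        · exact (hmemN y g).2 ⟨hfM, Or.inl ⟨hy1, hfy2⟩⟩
        · have hgz : g = z := by simpa using hg'
          subst hgz
          exact (hmemN y g).2 ⟨hzM, Or.inl ⟨by omega, by omega⟩⟩
      · rw [hcard y hyM, Finset.card_insert_of_notMem (by simp [hzne.symm]),
          Finset.card_singleton]
    have hNz : ({a, y} : Finset (ℕ × ℕ)) = N z := by
      apply Finset.eq_of_subset_of_card_le
      · intro g hg
        rcases Finset.mem_insert.mp hg with rfl | hg'
        · exact (hmemN z g).2 ⟨haM, Or.inr ⟨haz1, hz2⟩⟩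
        · have hgy : g = y := by simpa using hg'
          subst hgy
          exact (hmemN z g).2 ⟨hyM, Or.inr ⟨by omega, by omega⟩⟩
      · rw [hcard z hzM, Finset.card_insert_of_notMem (by simp [hyne.symm]),
          Finset.card_singleton]
    have hsub : M ⊆ ({a, y, f, z} : Finset (ℕ × ℕ)) := by
      apply conclude _ (by simp)
      intro u g hu hg hint
      have hgNu : g ∈ N u := (hmemN u g).2 ⟨hg, hint⟩
      rcases Finset.mem_insert.mp hu with rfl | hu'
      · rw [hBz] at hgNu; simp at hgNu ⊢; tauto
      rcases Finset.mem_insert.mp hu' with rfl | hu''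
      · rw [← hNy] at hgNu; simp at hgNu ⊢; tauto
      rcases Finset.mem_insert.mp hu'' with rfl | hu'''
      · rw [hLy] at hgNu; simp at hgNu ⊢; tauto
      · have huz : u = z := by simpa using hu'''
        subst huz
        rw [← hNz] at hgNu; simp at hgNu ⊢; tauto
    calc M.card ≤ ({a, y, f, z} : Finset (ℕ × ℕ)).card := Finset.card_le_card hsub
      _ ≤ 4 := by
          have h1 := Finset.card_insert_le a ({y, f, z} : Finset (ℕ × ℕ))
          have h2 := Finset.card_insert_le y ({f, z} : Finset (ℕ × ℕ))
          have h3 := Finset.card_insert_le f ({z} : Finset (ℕ × ℕ))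
          have h4 : ({z} : Finset (ℕ × ℕ)).card = 1 := Finset.card_singleton z
          omega
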